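/- arXiv:2304.04032 — 4 statements merged into one kernel-verified Lean document; each statement's English description precedes it below -/
import Mathlib

section
/- With the setup above, for ω ∈ T_x M, λ ∈ ℝ^d, and any matrix Λ_x satisfying Λ_x B_x = 0 and Λ_x = Λ_x P_x, one has Λ_x (DB_x[ω]) λ = −Λ_x W_x(ω, B_x λ), where W_x is the Weingarten map W_x(ω,u) = P_x(D(x ↦ P_x)(x)[ω]·u). -/
open Matrix

attribute [local instance] Matrix.normedAddCommGroup Matrix.normedSpace

/-- Matrix multiplication as a continuous bilinear map. -/
noncomputable def matMulCLM (n d : ℕ) :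
    Matrix (Fin n) (Fin d) ℝ →L[ℝ] Matrix (Fin d) (Fin n) ℝ →L[ℝ] Matrix (Fin n) (Fin n) ℝ :=
  LinearMap.toContinuousLinearMap
    { toFun := fun A => LinearMap.toContinuousLinearMap
        { toFun := fun C => A * C
          map_add' := fun C D => Matrix.mul_add A C D
          map_smul' := fun r C => (Matrix.mul_smul A r C) }
      map_add' := fun A A' => by
        ext C : 1
        simp [Matrix.add_mul]
      map_smul' := fun r A => by
        ext C : 1
        simp [Matrix.smul_mul] }

/-- Matrix transpose as a continuous linear map. -/
noncomputable def transCLM (n d : ℕ) :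
    Matrix (Fin n) (Fin d) ℝ →L[ℝ] Matrix (Fin d) (Fin n) ℝ :=
  LinearMap.toContinuousLinearMap
    { toFun := fun A => Aᵀ
      map_add' := fun A B => Matrix.transpose_add A B
      map_smul' := fun r A => Matrix.transpose_smul r A }

@[simp] lemma matMulCLM_apply (n d : ℕ) (A : Matrix (Fin n) (Fin d) ℝ)
    (C : Matrix (Fin d) (Fin n) ℝ) : matMulCLM n d A C = A * C := rfl

@[simp] lemma transCLM_apply (n d : ℕ) (A : Matrix (Fin n) (Fin d) ℝ) :
    transCLM n d A = Aᵀ := rfl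

/-- Derivative of the projection `P y = 1 - B y (B y)ᵀ`. -/
lemma fderiv_proj (n d : ℕ) (x : Fin n → ℝ)
    (B : (Fin n → ℝ) → Matrix (Fin n) (Fin d) ℝ)
    (B' : (Fin n → ℝ) →L[ℝ] Matrix (Fin n) (Fin d) ℝ)
    (hB : HasFDerivAt B B' x)
    (P : (Fin n → ℝ) → Matrix (Fin n) (Fin n) ℝ)
    (hP : P = fun y => 1 - B y * (B y)ᵀ)
    (ω : Fin n → ℝ) :
    fderiv ℝ P x ω = -(B' ω * (B x)ᵀ + B x * (B' ω)ᵀ) := by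
  have hBt : HasFDerivAt (fun y => (B y)ᵀ) ((transCLM n d).comp B') x :=
    (transCLM n d).hasFDerivAt.comp x hB
  have hpair : HasFDerivAt (fun y => (B y, (B y)ᵀ)) (B'.prod ((transCLM n d).comp B')) x :=
    HasFDerivAt.prodMk hB hBt
  have hbil := ((matMulCLM n d).isBoundedBilinearMap.hasFDerivAt (B x, (B x)ᵀ)).comp x hpair
  have hmul : HasFDerivAt (fun y => B y * (B y)ᵀ)
      (((matMulCLM n d).isBoundedBilinearMap.deriv (B x, (B x)ᵀ)).comp
        (B'.prod ((transCLM n d).comp B'))) x := hbil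
  have hPd : HasFDerivAt P (-((((matMulCLM n d).isBoundedBilinearMap.deriv (B x, (B x)ᵀ)).comp
        (B'.prod ((transCLM n d).comp B'))))) x := by
    rw [hP]
    have h0 := (hasFDerivAt_const (1 : Matrix (Fin n) (Fin n) ℝ) x).sub hmul
    exact h0.congr_fderiv (zero_sub _)
  rw [show fderiv ℝ P x = _ from HasFDerivAt.fderiv hPd]
  change -(B x * (B' ω)ᵀ + B' ω * (B x)ᵀ) = _
  simp [IsBoundedBilinearMap.deriv_apply]
  abel

/-- For any matrix `Λ` with `Λ B_x = 0` and `Λ = Λ P_x`, one has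
`Λ (DB_x[ω]) λ = −Λ W_x(ω, B_x λ)`, where `W_x(ω,u) = P_x(DP[ω]·u)` is the
Weingarten map and `P_y = I − B_y B_yᵀ`. -/
theorem lambda_weingarten (n d : ℕ) (x : Fin n → ℝ)
    (B : (Fin n → ℝ) → Matrix (Fin n) (Fin d) ℝ)
    (B' : (Fin n → ℝ) →L[ℝ] Matrix (Fin n) (Fin d) ℝ)
    (hB : HasFDerivAt B B' x)
    (horth : (B x)ᵀ * B x = 1)
    (P : (Fin n → ℝ) → Matrix (Fin n) (Fin n) ℝ)
    (hP : P = fun y => 1 - B y * (B y)ᵀ)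
    (Lam : Matrix (Fin n) (Fin n) ℝ)
    (hLB : Lam * B x = 0) (hLP : Lam = Lam * P x)
    (ω : Fin n → ℝ) (hω : (B x)ᵀ *ᵥ ω = 0)
    (lam : Fin d → ℝ) :
    Lam *ᵥ ((B' ω) *ᵥ lam) =
      -(Lam *ᵥ (P x *ᵥ ((fderiv ℝ P x ω) *ᵥ (B x *ᵥ lam)))) := by
  rw [fderiv_proj n d x B B' hB P hP ω]
  conv_rhs => rw [Matrix.mulVec_mulVec, ← hLP]
  have h1 : (B' ω * (B x)ᵀ) *ᵥ (B x *ᵥ lam) = B' ω *ᵥ lam := by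
    rw [Matrix.mulVec_mulVec, Matrix.mul_assoc, horth, Matrix.mul_one]
  have h2 : Lam *ᵥ ((B x * (B' ω)ᵀ) *ᵥ (B x *ᵥ lam)) = 0 := by
    rw [Matrix.mulVec_mulVec, Matrix.mulVec_mulVec, ← Matrix.mul_assoc, hLB,
      Matrix.zero_mul, Matrix.zero_mul, Matrix.zero_mulVec]
  rw [Matrix.neg_mulVec, Matrix.add_mulVec, Matrix.mulVec_neg, Matrix.mulVec_add, h1, h2,
    add_zero, neg_neg]
end

section
/- Let B̄ ∈ ℝ^{j×d} have full column rank with j ≥ d, let B̄† = (B̄^T B̄)^{-1} B̄^T, let t > 0, and let G ∈ ℝ^{j×j} be a symmetric matrix that is positive definite on the subspace {w ∈ ℝ^j : B̄^T w = 0}. Then the matrix J = B̄ B̄† + t(I_j − B̄ B̄†) G is nonsingular. -/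
open Matrix

/-- If `B̄ ∈ ℝ^{j×d}` has full column rank (`j ≥ d`), `t > 0`, and the symmetric
matrix `G` is positive definite on `{w : B̄ᵀ w = 0}`, then
`J = B̄B̄† + t(I − B̄B̄†)G` is nonsingular, where `B̄† = (B̄ᵀB̄)⁻¹B̄ᵀ`. -/
theorem J11_nonsingular (j d : ℕ) (hjd : d ≤ j) (t : ℝ) (ht : 0 < t)
    (Bb : Matrix (Fin j) (Fin d) ℝ)
    (hrank : ∀ v : Fin d → ℝ, Bb *ᵥ v = 0 → v = 0)
    (G : Matrix (Fin j) (Fin j) ℝ) (hGsymm : Gᵀ = G)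
    (hpos : ∀ w : Fin j → ℝ, w ≠ 0 → Bbᵀ *ᵥ w = 0 → 0 < w ⬝ᵥ (G *ᵥ w)) :
    IsUnit (Bb * ((Bbᵀ * Bb)⁻¹ * Bbᵀ) +
      t • (((1 : Matrix (Fin j) (Fin j) ℝ) - Bb * ((Bbᵀ * Bb)⁻¹ * Bbᵀ)) * G)) := by
  set A : Matrix (Fin d) (Fin d) ℝ := Bbᵀ * Bb with hA
  -- A = B̄ᵀB̄ is invertible since B̄ has full column rank
  have hAker : ∀ v : Fin d → ℝ, A *ᵥ v = 0 → v = 0 := by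
    intro v hv
    have h2 : Bb *ᵥ v = 0 := by
      have hdot : (Bb *ᵥ v) ⬝ᵥ (Bb *ᵥ v) = 0 := by
        have : v ⬝ᵥ (A *ᵥ v) = 0 := by rw [hv, dotProduct_zero]
        rwa [hA, ← Matrix.mulVec_mulVec, Matrix.dotProduct_mulVec,
          Matrix.vecMul_transpose] at this
      exact dotProduct_self_eq_zero.mp hdot
    exact hrank _ h2
  have hAunit : IsUnit A := by
    rw [← Matrix.mulVec_injective_iff_isUnit]
    intro x y hxy
    have h : A *ᵥ (x - y) = 0 := by rw [Matrix.mulVec_sub, hxy, sub_self]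
    exact sub_eq_zero.mp (hAker _ h)
  have hAdet : IsUnit A.det := (Matrix.isUnit_iff_isUnit_det A).mp hAunit
  have hAinv : A⁻¹ * A = 1 := Matrix.nonsing_inv_mul A hAdet
  set P : Matrix (Fin j) (Fin j) ℝ := Bb * (A⁻¹ * Bbᵀ) with hP
  -- key algebraic identities
  have hBtP : Bbᵀ * P = Bbᵀ := by
    rw [hP, ← Matrix.mul_assoc, ← hA, ← Matrix.mul_assoc,
      Matrix.mul_nonsing_inv A hAdet, Matrix.one_mul]
  have hPsymm : Pᵀ = P := by
    rw [hP, Matrix.transpose_mul, Matrix.transpose_mul, Matrix.transpose_transpose,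
      Matrix.transpose_nonsing_inv, Matrix.transpose_mul, Matrix.transpose_transpose,
      ← hA, Matrix.mul_assoc]
  set J := P + t • (((1 : Matrix (Fin j) (Fin j) ℝ) - P) * G) with hJ
  rw [← Matrix.mulVec_injective_iff_isUnit]
  intro x y hxy
  have hker : ∀ η : Fin j → ℝ, J *ᵥ η = 0 → η = 0 := by
    intro η hη
    -- B̄ᵀ η = 0
    have hBtJ : Bbᵀ * J = Bbᵀ := by
      have h1 : Bbᵀ * (((1 : Matrix (Fin j) (Fin j) ℝ) - P) * G) = 0 := by
        rw [Matrix.sub_mul, Matrix.one_mul, Matrix.mul_sub, ← Matrix.mul_assoc, hBtP, sub_self]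
      rw [hJ, Matrix.mul_add, Matrix.mul_smul, h1, smul_zero, add_zero, hBtP]
    have hBtη : Bbᵀ *ᵥ η = 0 := by
      have := congrArg (Bbᵀ *ᵥ ·) hη
      simpa [Matrix.mulVec_mulVec, hBtJ] using this
    -- P η = 0
    have hPη : P *ᵥ η = 0 := by
      rw [hP, ← Matrix.mulVec_mulVec, ← Matrix.mulVec_mulVec, hBtη,
        Matrix.mulVec_zero, Matrix.mulVec_zero]
    -- hence (I - P) G η = 0
    have hGη : ((1 : Matrix (Fin j) (Fin j) ℝ) - P) *ᵥ (G *ᵥ η) = 0 := by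
      have h0 : (t • (((1 : Matrix (Fin j) (Fin j) ℝ) - P) * G)) *ᵥ η = 0 := by
        have := hη
        rw [hJ, Matrix.add_mulVec, hPη, zero_add] at this
        exact this
      have h1 : (((1 : Matrix (Fin j) (Fin j) ℝ) - P) * G) *ᵥ η = 0 := by
        have := congrArg (fun v => t⁻¹ • v) h0
        simpa [Matrix.smul_mulVec, smul_smul, inv_mul_cancel₀ ht.ne'] using this
      rwa [← Matrix.mulVec_mulVec] at h1
    -- so G η = P (G η), hence ηᵀ G η = (P η)ᵀ (G η) = 0
    have hGPG : G *ᵥ η = P *ᵥ (G *ᵥ η) := by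
      have := hGη
      rw [Matrix.sub_mulVec, Matrix.one_mulVec, sub_eq_zero] at this
      exact this
    have hquad : η ⬝ᵥ (G *ᵥ η) = 0 := by
      rw [hGPG, Matrix.dotProduct_mulVec]
      have hv : η ᵥ* P = 0 := by
        rw [← hPsymm, Matrix.vecMul_transpose]
        exact hPη
      rw [hv, zero_dotProduct]
    by_contra hne
    exact absurd hquad (ne_of_gt (hpos η hne hBtη))
  have h : J *ᵥ (x - y) = 0 := by rw [Matrix.mulVec_sub, hxy, sub_self]
  exact sub_eq_zero.mp (hker _ h)
end

section
/- Let G : ℝ^m → ℝ^m be locally Lipschitz near y⁰ and suppose G is strongly semismooth at y⁰ with respect to a compact-valued, upper semicontinuous set-valued map K: for every J ∈ K(y⁰ + d), G(y⁰ + d) − G(y⁰) − J d = O(‖d‖²) as d → 0. If additionally every J ∈ K(y) is invertible with ‖J^{-1}‖ ≤ C uniformly for y near y⁰ and G(y⁰) = 0, then the semismooth Newton iteration y_{k+1} = y_k − J_k^{-1} G(y_k) with J_k ∈ K(y_k) converges quadratically to y⁰ from any starting point sufficiently close to y⁰. -/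
/-- Local quadratic convergence of the semismooth Newton iteration: if `G` is
locally Lipschitz near `y⁰`, strongly semismooth at `y⁰` with respect to a
compact-valued upper semicontinuous map `K`, every `J ∈ K(y)` near `y⁰` is
invertible with uniformly bounded inverse, and `G(y⁰) = 0`, then the iteration
`y_{k+1} = y_k − J_k⁻¹ G(y_k)` (`J_k ∈ K(y_k)`) converges quadratically to `y⁰`
from any starting point sufficiently close to `y⁰`. -/
theorem semismooth_newton_quadratic (m : ℕ)
    (G : EuclideanSpace ℝ (Fin m) → EuclideanSpace ℝ (Fin m))
    (y0 : EuclideanSpace ℝ (Fin m))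
    (K : EuclideanSpace ℝ (Fin m) →
      Set (EuclideanSpace ℝ (Fin m) →L[ℝ] EuclideanSpace ℝ (Fin m)))
    (hKcomp : ∀ y, IsCompact (K y))
    (hKusc : ∀ y : EuclideanSpace ℝ (Fin m), ∀ V : Set (EuclideanSpace ℝ (Fin m) →L[ℝ]
      EuclideanSpace ℝ (Fin m)), IsOpen V → K y ⊆ V →
      ∀ᶠ y' in nhds y, K y' ⊆ V)
    (hlip : ∃ r > (0 : ℝ), ∃ L : NNReal, LipschitzOnWith L G (Metric.ball y0 r))
    (hss : ∃ c₁ > (0 : ℝ), ∃ r₁ > (0 : ℝ), ∀ d : EuclideanSpace ℝ (Fin m), ‖d‖ < r₁ →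
      ∀ J ∈ K (y0 + d), ‖G (y0 + d) - G y0 - J d‖ ≤ c₁ * ‖d‖ ^ 2)
    (C : ℝ) (hC : 0 < C)
    (hinv : ∃ r₂ > (0 : ℝ), ∀ y, ‖y - y0‖ < r₂ → ∀ J ∈ K y,
      ∃ Ji : EuclideanSpace ℝ (Fin m) →L[ℝ] EuclideanSpace ℝ (Fin m),
        Ji.comp J = ContinuousLinearMap.id ℝ _ ∧
        J.comp Ji = ContinuousLinearMap.id ℝ _ ∧ ‖Ji‖ ≤ C)
    (hG0 : G y0 = 0) :
    ∃ δ > (0 : ℝ), ∃ c > (0 : ℝ),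
      ∀ (y : ℕ → EuclideanSpace ℝ (Fin m))
        (J Ji : ℕ → (EuclideanSpace ℝ (Fin m) →L[ℝ] EuclideanSpace ℝ (Fin m))),
        (∀ k, J k ∈ K (y k)) →
        (∀ k, (Ji k).comp (J k) = ContinuousLinearMap.id ℝ _ ∧
          (J k).comp (Ji k) = ContinuousLinearMap.id ℝ _) →
        (∀ k, y (k + 1) = y k - Ji k (G (y k))) →
        ‖y 0 - y0‖ < δ →
        (∀ k, ‖y (k + 1) - y0‖ ≤ c * ‖y k - y0‖ ^ 2) ∧
          Filter.Tendsto y Filter.atTop (nhds y0) := by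
  obtain ⟨c₁, hc₁, r₁, hr₁, hss⟩ := hss
  obtain ⟨r₂, hr₂, hinv⟩ := hinv
  set c : ℝ := C * c₁ with hc_def
  have hcpos : 0 < c := mul_pos hC hc₁
  set δ : ℝ := min r₁ (min r₂ (1 / (2 * c))) with hδ_def
  have hδpos : 0 < δ := lt_min hr₁ (lt_min hr₂ (by positivity))
  refine ⟨δ, hδpos, c, hcpos, ?_⟩
  intro y J Ji hJK hJi hiter hy0
  have step : ∀ k, ‖y k - y0‖ < δ → ‖y (k + 1) - y0‖ ≤ c * ‖y k - y0‖ ^ 2 := by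
    intro k hk
    have hk1 : ‖y k - y0‖ < r₁ := lt_of_lt_of_le hk (min_le_left _ _)
    have hk2 : ‖y k - y0‖ < r₂ :=
      lt_of_lt_of_le hk ((min_le_right _ _).trans (min_le_left _ _))
    obtain ⟨Ji', h1, h2, hnorm⟩ := hinv (y k) hk2 (J k) (hJK k)
    have hJieq : Ji k = Ji' := by
      calc Ji k = (Ji k).comp ((J k).comp Ji') := by rw [h2]; ext x; rfl
        _ = ((Ji k).comp (J k)).comp Ji' := by rw [ContinuousLinearMap.comp_assoc]
        _ = Ji' := by rw [(hJi k).1]; ext x; rfl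
    set d := y k - y0 with hd
    have hyd : y k = y0 + d := by simp [hd]
    have hss' := hss d hk1 (J k) (by rw [← hyd]; exact hJK k)
    have hinvd : Ji k (J k d) = d := by
      have h := (hJi k).1
      have h' : ((Ji k).comp (J k)) d = d := by rw [h]; rfl
      simpa using h'
    have heq : y (k + 1) - y0 = -(Ji k (G (y0 + d) - G y0 - (J k) d)) := by
      rw [hiter k, hyd]
      simp only [map_sub, hinvd, hG0, map_zero]
      abel
    rw [heq, norm_neg]
    calc ‖Ji k (G (y0 + d) - G y0 - (J k) d)‖
        ≤ ‖Ji k‖ * ‖G (y0 + d) - G y0 - (J k) d‖ := (Ji k).le_opNorm _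
      _ ≤ C * (c₁ * ‖d‖ ^ 2) :=
          mul_le_mul (hJieq ▸ hnorm) hss' (norm_nonneg _) hC.le
      _ = c * ‖d‖ ^ 2 := by rw [hc_def]; ring
  have half : ∀ k, ‖y k - y0‖ < δ →
      ‖y (k + 1) - y0‖ ≤ (1 / 2) * ‖y k - y0‖ ∧ ‖y (k + 1) - y0‖ < δ := by
    intro k hk
    have h1 := step k hk
    have hδle : δ ≤ 1 / (2 * c) := (min_le_right _ _).trans (min_le_right _ _)
    have hkle : ‖y k - y0‖ ≤ 1 / (2 * c) := hk.le.trans hδle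
    have h2 : c * ‖y k - y0‖ ^ 2 ≤ (1 / 2) * ‖y k - y0‖ := by
      have hcc : c * (1 / (2 * c)) = 1 / 2 := by field_simp
      nlinarith [norm_nonneg (y k - y0)]
    refine ⟨h1.trans h2, ?_⟩
    have := h1.trans h2
    have hnn := norm_nonneg (y k - y0)
    linarith
  have hball : ∀ k, ‖y k - y0‖ < δ := by
    intro k
    induction k with
    | zero => exact hy0
    | succ n ih => exact (half n ih).2
  refine ⟨fun k => step k (hball k), ?_⟩
  have hgeom : ∀ k, ‖y k - y0‖ ≤ (1 / 2) ^ k * ‖y 0 - y0‖ := by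
    intro k
    induction k with
    | zero => simp
    | succ n ih =>
      calc ‖y (n + 1) - y0‖ ≤ (1 / 2) * ‖y n - y0‖ := (half n (hball n)).1
        _ ≤ (1 / 2) * ((1 / 2) ^ n * ‖y 0 - y0‖) := by linarith
        _ = (1 / 2) ^ (n + 1) * ‖y 0 - y0‖ := by ring
  have htend : Filter.Tendsto (fun k => ‖y k - y0‖) Filter.atTop (nhds 0) := by
    apply squeeze_zero (fun k => norm_nonneg _) hgeom
    have h := tendsto_pow_atTop_nhds_zero_of_lt_one (by norm_num : (0:ℝ) ≤ 1 / 2)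
      (by norm_num : (1:ℝ) / 2 < 1)
    simpa using h.mul_const ‖y 0 - y0‖
  exact tendsto_iff_norm_sub_tendsto_zero.mpr htend
end

section
/- Let {x_k} be a sequence in a metric space with dist(x_{k+1}, x_k) → 0, let x* be an accumulation point of {x_k}, and let N, S be sets with x* ∈ N, dist(S, N) > 0, and such that whenever x_k ∈ N and dist(x_{k+1}, x_k) < dist(S, N), then x_{k+1} ∈ N ∪ (interior region enclosed by S containing N); assume further that any point of the enclosed region with F-value below the threshold defining N lies in N and that F(x_{k+1}) ≤ F(x_k). If x_J ∈ N for some J large enough that dist(x_{k+1}, x_k) < dist(S, N) for all k ≥ J, then x_k ∈ N for all k ≥ J. -/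
/-- Abstract capture argument: a descent sequence whose steps beyond index `J`
are smaller than the separation `ε` between the sphere `S` and the sublevel
neighborhood `N = B̄(x*,δ) ∩ {F < c}`, and which cannot jump across `S`, stays
in `N` forever once it enters at index `J`. -/
theorem capture_argument {X : Type*} [MetricSpace X]
    (F : X → ℝ) (xstar : X) (δ c ε : ℝ) (hε : 0 < ε)
    (x : ℕ → X)
    (N : Set X)
    (hN : N = Metric.closedBall xstar δ ∩ {z | F z < c})
    (hsep : ∀ a ∈ Metric.sphere xstar δ, ∀ b ∈ N, ε ≤ dist a b)
    (hstep : ∀ k, x k ∈ N → dist (x (k + 1)) (x k) < ε →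
      x (k + 1) ∈ Metric.closedBall xstar δ)
    (hdesc : ∀ k, F (x (k + 1)) ≤ F (x k))
    (J : ℕ)
    (hsmall : ∀ k, J ≤ k → dist (x (k + 1)) (x k) < ε)
    (hJ : x J ∈ N) :
    ∀ k, J ≤ k → x k ∈ N := by
  intro k hk
  induction k with
  | zero => exact Nat.le_zero.mp hk ▸ hJ
  | succ n ih =>
    rcases Nat.lt_or_ge J (n + 1) with h | h
    · have hn : J ≤ n := Nat.lt_succ_iff.mp h
      have hxn := ih hn
      have hball := hstep n hxn (hsmall n hn)
      have hFn : F (x n) < c := (hN ▸ hxn).2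
      exact hN ▸ ⟨hball, lt_of_le_of_lt (hdesc n) hFn⟩
    · exact (Nat.le_antisymm h hk) ▸ hJ
end
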